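/- Let U be a chi-squared random variable with k degrees of freedom and let n ≥ 1. Then for every u with u² ≥ 4k/n, P(U/n ≥ u²) ≤ exp(-n u²/8). -/

import Mathlib

open MeasureTheory ProbabilityTheory Real
open scoped NNReal ENNReal

lemma gauss_smul_eq :
    (fun x : ℝ => ((gaussianPDFReal 0 1 x).toNNReal : ℝ≥0) • rexp ((1/4) * x ^ 2))
      = fun x : ℝ => (Real.sqrt (2 * Real.pi))⁻¹ * rexp (-(1/4) * x ^ 2) := by
  funext x
  have h0 : 0 ≤ gaussianPDFReal 0 1 x := gaussianPDFReal_nonneg 0 1 x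
  rw [NNReal.smul_def, Real.coe_toNNReal _ h0]
  simp only [gaussianPDFReal, NNReal.coe_one, mul_one, sub_zero, smul_eq_mul]
  rw [mul_assoc, ← Real.exp_add]
  ring_nf

lemma gauss_integrable :
    Integrable (fun x : ℝ => rexp ((1/4) * x ^ 2)) (gaussianReal 0 1) := by
  rw [gaussianReal_of_var_ne_zero 0 one_ne_zero]
  have hpdf : gaussianPDF 0 1 =
      fun x => (((gaussianPDFReal 0 1 x).toNNReal : ℝ≥0) : ℝ≥0∞) := rfl
  rw [hpdf,
    integrable_withDensity_iff_integrable_smul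
      ((measurable_gaussianPDFReal 0 1).real_toNNReal)]
  rw [gauss_smul_eq]
  exact (integrable_exp_neg_mul_sq (by norm_num : (0:ℝ) < 1/4)).const_mul _

lemma gauss_integral :
    ∫ x, rexp ((1/4) * x ^ 2) ∂(gaussianReal 0 1) = Real.sqrt 2 := by
  rw [gaussianReal_of_var_ne_zero 0 one_ne_zero]
  have hpdf : gaussianPDF 0 1 =
      fun x => (((gaussianPDFReal 0 1 x).toNNReal : ℝ≥0) : ℝ≥0∞) := rfl
  rw [hpdf, integral_withDensity_eq_integral_smul
      ((measurable_gaussianPDFReal 0 1).real_toNNReal)]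
  rw [gauss_smul_eq, integral_const_mul, integral_gaussian]
  rw [div_div_eq_mul_div, ← Real.sqrt_inv, ← Real.sqrt_mul (by positivity)]
  rw [show (2 * Real.pi)⁻¹ * (Real.pi * 4 / 1) = 2 by field_simp; ring]

/-- Chi-squared tail bound (Lemma chi2). -/
theorem stmt3 {Ω : Type*} [MeasureSpace Ω] [IsProbabilityMeasure (ℙ : Measure Ω)]
    (k n : ℕ) (hn : 1 ≤ n) (Z : Fin k → Ω → ℝ)
    (hmeas : ∀ i, Measurable (Z i))
    (hindep : iIndepFun Z ℙ)
    (hgauss : ∀ i, Measure.map (Z i) ℙ = gaussianReal 0 1)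
    (u : ℝ) (hu : 4 * (k : ℝ) / n ≤ u ^ 2) :
    (ℙ {ω | u ^ 2 ≤ (∑ i, Z i ω ^ 2) / n}).toReal ≤ Real.exp (-(n : ℝ) * u ^ 2 / 8) := by
  have hnpos : (0:ℝ) < n := by exact_mod_cast hn
  set X : Fin k → Ω → ℝ := fun i ω => Z i ω ^ 2 with hX
  have hXmeas : ∀ i, Measurable (X i) := fun i => (hmeas i).pow_const 2
  have hXindep : iIndepFun X ℙ :=
    hindep.comp (fun _ x => x ^ 2) (fun _ => measurable_id.pow_const 2)
  have hint : ∀ i, Integrable (fun ω => rexp ((1/4) * X i ω)) ℙ := by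
    intro i
    have h := gauss_integrable
    rw [← hgauss i] at h
    exact (integrable_map_measure
      ((by measurability : Measurable fun x : ℝ => rexp ((1/4) * x ^ 2)).aestronglyMeasurable)
      (hmeas i).aemeasurable).mp h
  have hmgf : ∀ i, mgf (X i) ℙ (1/4) = Real.sqrt 2 := by
    intro i
    have : mgf (X i) ℙ (1/4) = ∫ x, rexp ((1/4) * x ^ 2) ∂(Measure.map (Z i) ℙ) := by
      rw [mgf, integral_map (hmeas i).aemeasurable
        ((by measurability : Measurable fun x : ℝ => rexp ((1/4) * x ^ 2)).aestronglyMeasurable)]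
    rw [this, hgauss i, gauss_integral]
  have hset : {ω | u ^ 2 ≤ (∑ i, Z i ω ^ 2) / n}
      = {ω | (n:ℝ) * u ^ 2 ≤ (∑ i, X i) ω} := by
    ext ω
    simp only [Set.mem_setOf_eq, Finset.sum_apply, hX]
    rw [le_div_iff₀ hnpos, mul_comm]
  have hch := measure_ge_le_exp_mul_mgf (μ := ℙ) (X := ∑ i, X i) ((n:ℝ) * u ^ 2)
    (by norm_num : (0:ℝ) ≤ 1/4)
    (hXindep.integrable_exp_mul_sum hXmeas (fun i _ => hint i))
  rw [hXindep.mgf_sum hXmeas] at hch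
  simp only [hmgf, Finset.prod_const, Finset.card_univ, Fintype.card_fin] at hch
  rw [hset]
  refine hch.trans ?_
  have hs2 : (0:ℝ) < Real.sqrt 2 := by positivity
  have h2 : Real.sqrt 2 ^ k = rexp ((k:ℝ) * Real.log (Real.sqrt 2)) := by
    rw [Real.exp_nat_mul, Real.exp_log hs2]
  rw [h2, ← Real.exp_add, Real.exp_le_exp, Real.log_sqrt (by norm_num)]
  have hu' : 4 * (k:ℝ) ≤ (n:ℝ) * u ^ 2 := by
    rw [div_le_iff₀ hnpos] at hu; linarith [hu]
  have hk := mul_le_mul_of_nonneg_left Real.log_two_lt_d9.le (Nat.cast_nonneg (α := ℝ) k)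
  linarith
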